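/- A T-gain graph Φ on a connected graph is balanced if and only if the distance matrix D(Φ) is well defined (i.e., Φ is distance compatible) and D(Φ) is cospectral with the distance matrix D(G) of the underlying graph. -/

import Mathlib

open Matrix
open scoped Classical

noncomputable section

namespace GG

variable {V : Type*}

/-- The gain of a walk: product of the gains of its oriented edges. -/
def walkGain {G : SimpleGraph V} (φ : V → V → ℂ) {u v : V} (p : G.Walk u v) : ℂ :=
  (p.darts.map (fun d => φ d.toProd.1 d.toProd.2)).prod

/-- `φ` is a `𝕋`-gain function on `G`: unit modulus on edges, inverse under reversal. -/
def IsGain (G : SimpleGraph V) (φ : V → V → ℂ) : Prop :=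
  (∀ i j, G.Adj i j → ‖φ i j‖ = 1) ∧ (∀ i j, G.Adj i j → φ j i = (φ i j)⁻¹)

/-- Adjacency matrix of a gain graph. -/
def gainAdj [Fintype V] [DecidableEq V] (G : SimpleGraph V) (φ : V → V → ℂ) :
    Matrix V V ℂ := fun i j => if G.Adj i j then φ i j else 0

/-- A gain graph is balanced if every cycle has gain 1. -/
def GBalanced (G : SimpleGraph V) (φ : V → V → ℂ) : Prop :=
  ∀ (u : V) (c : G.Walk u u), c.IsCycle → walkGain φ c = 1

/-- All shortest paths between any pair of vertices have the same gain. -/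
def DistCompatible (G : SimpleGraph V) (φ : V → V → ℂ) : Prop :=
  ∀ (s t : V) (p q : G.Walk s t), p.length = G.dist s t → q.length = G.dist s t →
    walkGain φ p = walkGain φ q

/-- The set of gains of shortest `s`-`t` paths. -/
def shortestGains (G : SimpleGraph V) (φ : V → V → ℂ) (s t : V) : Set ℂ :=
  {z | ∃ p : G.Walk s t, p.length = G.dist s t ∧ walkGain φ p = z}

/-- The element of `S` maximizing the real part, ties broken by maximal imaginary part
(correct for finite nonempty sets of gains). -/
def lexMaxGain (S : Set ℂ) : ℂ :=
  ⟨sSup (Complex.re '' S), sSup (Complex.im '' {z ∈ S | z.re = sSup (Complex.re '' S)})⟩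

/-- The element of `S` minimizing the real part, ties broken by minimal imaginary part. -/
def lexMinGain (S : Set ℂ) : ℂ :=
  ⟨sInf (Complex.re '' S), sInf (Complex.im '' {z ∈ S | z.re = sInf (Complex.re '' S)})⟩

/-- The maximum gain distance matrix `D^max_<(Φ)` with respect to a strict order `lt`. -/
def Dmax [Fintype V] [DecidableEq V] (G : SimpleGraph V) (φ : V → V → ℂ)
    (lt : V → V → Prop) : Matrix V V ℂ := fun s t =>
  if lt s t then lexMaxGain (shortestGains G φ s t) * (G.dist s t : ℂ)
  else if lt t s then (starRingEnd ℂ) (lexMaxGain (shortestGains G φ t s)) * (G.dist s t : ℂ)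
  else 0

/-- The minimum gain distance matrix `D^min_<(Φ)` with respect to a strict order `lt`. -/
def Dmin [Fintype V] [DecidableEq V] (G : SimpleGraph V) (φ : V → V → ℂ)
    (lt : V → V → Prop) : Matrix V V ℂ := fun s t =>
  if lt s t then lexMinGain (shortestGains G φ s t) * (G.dist s t : ℂ)
  else if lt t s then (starRingEnd ℂ) (lexMinGain (shortestGains G φ t s)) * (G.dist s t : ℂ)
  else 0

/-- Vertex order independence: the gain distance matrices agree for the standard order
and its reverse. -/
def OrderIndependent [Fintype V] [DecidableEq V] [LinearOrder V] (G : SimpleGraph V)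
    (φ : V → V → ℂ) : Prop :=
  Dmax G φ (· < ·) = Dmax G φ (fun a b => b < a) ∧
  Dmin G φ (· < ·) = Dmin G φ (fun a b => b < a)

/-- The largest (real) eigenvalue of a matrix. -/
def maxEig [Fintype V] [DecidableEq V] (A : Matrix V V ℂ) : ℝ :=
  sSup {r : ℝ | (r : ℂ) ∈ spectrum ℂ A}

/-- The spectral radius of a matrix. -/
def specRad [Fintype V] [DecidableEq V] (A : Matrix V V ℂ) : ℝ :=
  sSup {r : ℝ | ∃ z ∈ spectrum ℂ A, ‖z‖ = r}

/-- The distance matrix of the underlying graph, as a complex matrix. -/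
def distMatrix [Fintype V] [DecidableEq V] (G : SimpleGraph V) : Matrix V V ℂ :=
  fun i j => (G.dist i j : ℂ)

/-- Weighted gain adjacency matrix `A(Φ_w)`. -/
def wGainAdj [Fintype V] [DecidableEq V] (G : SimpleGraph V) (φ : V → V → ℂ)
    (w : V → V → ℝ) : Matrix V V ℂ := fun i j => if G.Adj i j then φ i j * (w i j : ℂ) else 0

/-- Weighted adjacency matrix `A(G_w)` of the underlying weighted graph. -/
def wAdj [Fintype V] [DecidableEq V] (G : SimpleGraph V) (w : V → V → ℝ) :
    Matrix V V ℂ := fun i j => if G.Adj i j then (w i j : ℂ) else 0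

/-! ### Auxiliary lemmas -/

@[simp] lemma walkGain_nil {G : SimpleGraph V} (φ : V → V → ℂ) {u : V} :
    walkGain φ (SimpleGraph.Walk.nil : G.Walk u u) = 1 := rfl

@[simp] lemma walkGain_cons {G : SimpleGraph V} (φ : V → V → ℂ) {u v w : V}
    (h : G.Adj u v) (p : G.Walk v w) :
    walkGain φ (SimpleGraph.Walk.cons h p) = φ u v * walkGain φ p := by
  simp [walkGain, SimpleGraph.Walk.darts_cons]

@[simp] lemma walkGain_append {G : SimpleGraph V} (φ : V → V → ℂ) {u v w : V}
    (p : G.Walk u v) (q : G.Walk v w) :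
    walkGain φ (p.append q) = walkGain φ p * walkGain φ q := by
  simp [walkGain, SimpleGraph.Walk.darts_append]

lemma abs_walkGain {G : SimpleGraph V} {φ : V → V → ℂ} (hφ : IsGain G φ) {u v : V}
    (p : G.Walk u v) : ‖walkGain φ p‖ = 1 := by
  induction p with
  | nil => simp
  | cons h p ih => simp [walkGain_cons, ih, hφ.1 _ _ h, _root_.map_mul]

lemma walkGain_ne_zero {G : SimpleGraph V} {φ : V → V → ℂ} (hφ : IsGain G φ) {u v : V}
    (p : G.Walk u v) : walkGain φ p ≠ 0 := by
  intro h0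
  have := abs_walkGain hφ p
  rw [h0] at this; simp at this

lemma walkGain_reverse {G : SimpleGraph V} {φ : V → V → ℂ} (hφ : IsGain G φ) {u v : V}
    (p : G.Walk u v) : walkGain φ p.reverse = (starRingEnd ℂ) (walkGain φ p) := by
  induction p with
  | nil => simp
  | cons h p ih =>
    rw [SimpleGraph.Walk.reverse_cons, walkGain_append, ih, walkGain_cons, walkGain_cons,
      walkGain_nil, _root_.map_mul]
    have h1 : φ _ _ = (φ _ _)⁻¹ := hφ.2 _ _ h
    rw [h1, Complex.inv_def, Complex.normSq_eq_norm_sq, hφ.1 _ _ h]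
    push_cast
    ring

lemma walkGain_rotate {G : SimpleGraph V} (φ : V → V → ℂ) {u v : V} (c : G.Walk v v)
    (h : u ∈ c.support) : walkGain φ (c.rotate _ h) = walkGain φ c := by
  have hr := SimpleGraph.Walk.rotate_darts c _ h
  exact List.Perm.prod_eq (List.Perm.map _ hr.perm)

lemma path_length_one_of_end_edge {G : SimpleGraph V} {u : V} :
    ∀ {v : V} (q : G.Walk v u), q.IsPath → s(u,v) ∈ q.edges → q.length = 1 := by
  intro v q
  induction q with
  | nil => intro _ he; simp at he
  | @cons a b _ h' q' ih =>
    intro hp he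
    rw [SimpleGraph.Walk.edges_cons, List.mem_cons] at he
    rcases he with he | he
    · rw [Sym2.eq_iff] at he
      rcases he with ⟨h1, h2⟩ | ⟨h1, h2⟩
      · exact absurd h2 h'.ne
      · subst h1
        have hq' : q' = SimpleGraph.Walk.nil :=
          (SimpleGraph.Walk.isPath_iff_eq_nil (p := q')).mp hp.of_cons
        simp [hq']
    · exfalso
      have hv : a ∈ q'.support := SimpleGraph.Walk.snd_mem_support_of_mem_edges q' he
      exact ((SimpleGraph.Walk.cons_isPath_iff h' q').mp hp).2 hv

lemma closedWalkGain_eq_one {G : SimpleGraph V} {φ : V → V → ℂ} (hφ : IsGain G φ)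
    (hb : GBalanced G φ) (u : V) (c : G.Walk u u) : walkGain φ c = 1 := by
  have key : ∀ (n : ℕ) (u : V) (c : G.Walk u u), c.length ≤ n → walkGain φ c = 1 := by
    intro n
    induction n with
    | zero =>
      intro u c hc
      cases c with
      | nil => simp
      | cons h p => simp [SimpleGraph.Walk.length_cons] at hc
    | succ n ih =>
      intro u c hc
      cases c with
      | nil => simp
      | @cons _ v _ h p =>
        rw [SimpleGraph.Walk.length_cons] at hc
        have hu : u ∈ p.support := p.end_mem_support
        have hspec := p.take_spec hu
        set q := p.takeUntil u hu with hq
        set r := p.dropUntil u hu with hrdef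
        have hlen : q.length + r.length = p.length := by
          rw [← SimpleGraph.Walk.length_append, hspec]
        have hcntu : q.support.count u = 1 := p.count_support_takeUntil_eq_one hu
        have hgr : walkGain φ r = 1 := ih u r (by omega)
        have hgc : walkGain φ (SimpleGraph.Walk.cons h p)
            = walkGain φ (SimpleGraph.Walk.cons h q) := by
          rw [← hspec, walkGain_cons, walkGain_append, walkGain_cons, hgr, mul_one]
        rw [hgc]
        clear_value q r
        by_cases hnd : q.support.Nodup
        · by_cases he : s(u, v) ∈ q.edges
          · have hq1 : q.length = 1 :=
              path_length_one_of_end_edge q ((SimpleGraph.Walk.isPath_def q).mpr hnd) he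
            cases q with
            | nil => exact absurd h (G.loopless.irrefl u)
            | @cons _ w _ h'' q'' =>
              cases q'' with
              | nil =>
                rw [walkGain_cons, walkGain_cons, walkGain_nil, mul_one]
                rw [hφ.2 _ _ h]
                have : φ u v ≠ 0 := by
                  intro h0
                  have := hφ.1 _ _ h
                  rw [h0] at this; simp at this
                field_simp
              | cons h3 q3 => simp [SimpleGraph.Walk.length_cons] at hq1
          · have hcyc : (SimpleGraph.Walk.cons h q).IsCycle :=
              (SimpleGraph.Walk.cons_isCycle_iff q h).mpr
                ⟨(SimpleGraph.Walk.isPath_def q).mpr hnd, he⟩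
            exact hb u _ hcyc
        · obtain ⟨x, hdup⟩ := List.exists_duplicate_iff_not_nodup.mpr hnd
          have hcount : 2 ≤ q.support.count x := List.duplicate_iff_two_le_count.mp hdup
          have hxu : x ≠ u := by
            intro hxe; subst hxe
            rw [hcntu] at hcount; omega
          have hx : x ∈ (SimpleGraph.Walk.cons h q).support := by
            rw [SimpleGraph.Walk.support_cons]
            exact List.mem_cons_of_mem _ hdup.mem
          have hg2 : walkGain φ ((SimpleGraph.Walk.cons h q).rotate _ hx)
              = walkGain φ (SimpleGraph.Walk.cons h q) := walkGain_rotate φ _ hx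
          rw [← hg2]
          set c2 := (SimpleGraph.Walk.cons h q).rotate _ hx with hc2def
          have hlen2 : c2.length = q.length + 1 := by
            have := (SimpleGraph.Walk.rotate_darts (SimpleGraph.Walk.cons h q) _ hx).perm.length_eq
            rw [SimpleGraph.Walk.length_darts, SimpleGraph.Walk.length_darts,
              SimpleGraph.Walk.length_cons] at this
            exact this
          have hcount2 : 2 ≤ c2.support.tail.count x := by
            have hrot := SimpleGraph.Walk.support_rotate (SimpleGraph.Walk.cons h q) _ hx
            rw [hrot.perm.count_eq]
            rw [SimpleGraph.Walk.support_cons]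
            simpa using hcount
          have hnn : ¬ c2.Nil := by
            rw [SimpleGraph.Walk.not_nil_iff_lt_length, hlen2]; omega
          obtain ⟨y, h2, p2, hc2⟩ := SimpleGraph.Walk.not_nil_iff.mp hnn
          rw [hc2]
          rw [hc2, SimpleGraph.Walk.support_cons, List.tail_cons] at hcount2
          have hx2 : x ∈ p2.support := by
            have : 0 < p2.support.count x := by omega
            exact List.count_pos_iff.mp this
          have hspec2 := p2.take_spec hx2
          set t2 := p2.takeUntil x hx2 with ht2
          set d2 := p2.dropUntil x hx2 with hd2
          have hlen3 : t2.length + d2.length = p2.length := by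
            rw [← SimpleGraph.Walk.length_append, hspec2]
          have hp2len : p2.length + 1 ≤ n + 1 := by
            have : c2.length = p2.length + 1 := by rw [hc2, SimpleGraph.Walk.length_cons]
            omega
          have hd2pos : 1 ≤ d2.length := by
            have hcnt1 : t2.support.count x = 1 := p2.count_support_takeUntil_eq_one hx2
            have hsplit : p2.support = t2.support ++ d2.support.tail := by
              rw [← hspec2, SimpleGraph.Walk.support_append]
            have : p2.support.count x = t2.support.count x + d2.support.tail.count x := by
              rw [hsplit, List.count_append]
            have hle : d2.support.tail.count x ≤ d2.support.tail.length :=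
              List.count_le_length
            have : 1 ≤ d2.support.tail.count x := by omega
            have hlentail : d2.support.tail.length = d2.length := by
              rw [List.length_tail, SimpleGraph.Walk.length_support]; omega
            omega
          rw [← hspec2, walkGain_cons, walkGain_append]
          have hg3 : walkGain φ (SimpleGraph.Walk.cons h2 t2) = 1 := ih x _ (by
            rw [SimpleGraph.Walk.length_cons]; omega)
          have hg4 : walkGain φ d2 = 1 := ih x d2 (by omega)
          rw [walkGain_cons] at hg3
          rw [hg4, mul_one, hg3]
  exact key c.length u c le_rfl

lemma walkGain_endpoint {G : SimpleGraph V} {φ : V → V → ℂ} (hφ : IsGain G φ)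
    (hb : GBalanced G φ) {s t : V} (p q : G.Walk s t) : walkGain φ p = walkGain φ q := by
  have h1 : walkGain φ (p.append q.reverse) = 1 := closedWalkGain_eq_one hφ hb s _
  rw [walkGain_append, walkGain_reverse hφ] at h1
  have h2 : walkGain φ q * (starRingEnd ℂ) (walkGain φ q) = 1 := by
    rw [Complex.mul_conj, Complex.normSq_eq_norm_sq, abs_walkGain hφ q]
    norm_num
  calc walkGain φ p = walkGain φ p * ((starRingEnd ℂ) (walkGain φ q) * walkGain φ q) := by
        rw [mul_comm ((starRingEnd ℂ) (walkGain φ q)), h2, mul_one]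
    _ = (walkGain φ p * (starRingEnd ℂ) (walkGain φ q)) * walkGain φ q := by ring
    _ = walkGain φ q := by rw [h1, one_mul]

/-- The common gain of a (chosen) shortest walk. -/
def sg {G : SimpleGraph V} (hconn : G.Connected) (φ : V → V → ℂ) (s t : V) : ℂ :=
  walkGain φ (hconn.exists_walk_length_eq_dist s t).choose

lemma sg_eq {G : SimpleGraph V} {φ : V → V → ℂ} (hconn : G.Connected)
    (hdc : DistCompatible G φ) {s t : V} (p : G.Walk s t) (hp : p.length = G.dist s t) :
    walkGain φ p = sg hconn φ s t :=
  hdc s t p _ hp (hconn.exists_walk_length_eq_dist s t).choose_spec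

lemma walkGain_of_length_zero {G : SimpleGraph V} (φ : V → V → ℂ) {s : V}
    (p : G.Walk s s) (h : p.length = 0) : walkGain φ p = 1 := by
  cases p with
  | nil => simp
  | cons h' p' => simp [SimpleGraph.Walk.length_cons] at h

lemma sg_self {G : SimpleGraph V} (hconn : G.Connected) (φ : V → V → ℂ) (s : V) :
    sg hconn φ s s = 1 :=
  walkGain_of_length_zero φ _
    ((hconn.exists_walk_length_eq_dist s s).choose_spec.trans (SimpleGraph.dist_self))

lemma abs_sg {G : SimpleGraph V} {φ : V → V → ℂ} (hφ : IsGain G φ) (hconn : G.Connected)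
    (s t : V) : ‖sg hconn φ s t‖ = 1 :=
  abs_walkGain hφ _

lemma sg_symm {G : SimpleGraph V} {φ : V → V → ℂ} (hφ : IsGain G φ) (hconn : G.Connected)
    (hdc : DistCompatible G φ) (s t : V) :
    sg hconn φ t s = (starRingEnd ℂ) (sg hconn φ s t) := by
  have hl := (hconn.exists_walk_length_eq_dist s t).choose_spec
  set p := (hconn.exists_walk_length_eq_dist s t).choose
  have hrev : p.reverse.length = G.dist t s := by
    rw [SimpleGraph.Walk.length_reverse, hl, SimpleGraph.dist_comm]
  rw [← sg_eq hconn hdc p.reverse hrev, walkGain_reverse hφ]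
  exact congrArg _ (sg_eq hconn hdc p hl)

lemma sg_adj {G : SimpleGraph V} {φ : V → V → ℂ} (hconn : G.Connected)
    (hdc : DistCompatible G φ) {s t : V} (h : G.Adj s t) : sg hconn φ s t = φ s t := by
  have hd : (SimpleGraph.Walk.cons h SimpleGraph.Walk.nil).length = G.dist s t := by
    rw [SimpleGraph.Walk.length_cons, SimpleGraph.Walk.length_nil,
      SimpleGraph.dist_eq_one_iff_adj.mpr h]
  rw [← sg_eq hconn hdc _ hd, walkGain_cons, walkGain_nil, mul_one]

lemma shortestGains_eq {G : SimpleGraph V} {φ : V → V → ℂ} (hconn : G.Connected)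
    (hdc : DistCompatible G φ) (s t : V) :
    shortestGains G φ s t = {sg hconn φ s t} := by
  ext z
  constructor
  · rintro ⟨p, hp, rfl⟩
    exact sg_eq hconn hdc p hp
  · rintro rfl
    exact ⟨_, (hconn.exists_walk_length_eq_dist s t).choose_spec, rfl⟩

lemma lexMaxGain_singleton (z : ℂ) : lexMaxGain {z} = z := by
  unfold lexMaxGain
  rw [Set.image_singleton, csSup_singleton]
  have h2 : {w ∈ ({z} : Set ℂ) | w.re = z.re} = {z} := by
    ext w
    simp only [Set.mem_setOf_eq, Set.mem_singleton_iff]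
    constructor
    · rintro ⟨hw, _⟩; exact hw
    · rintro rfl; exact ⟨rfl, rfl⟩
  rw [h2, Set.image_singleton, csSup_singleton]

lemma Dmax_eq [Fintype V] [DecidableEq V] [LinearOrder V] {G : SimpleGraph V}
    {φ : V → V → ℂ} (hφ : IsGain G φ) (hconn : G.Connected) (hdc : DistCompatible G φ) :
    Dmax G φ (· < ·) = fun s t => sg hconn φ s t * (G.dist s t : ℂ) := by
  funext s t
  unfold Dmax
  rcases lt_trichotomy s t with h | h | h
  · rw [if_pos h, shortestGains_eq hconn hdc, lexMaxGain_singleton]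
  · subst h
    rw [if_neg (lt_irrefl s), if_neg (lt_irrefl s), SimpleGraph.dist_self]
    simp
  · rw [if_neg (not_lt.mpr h.le), if_pos h, shortestGains_eq hconn hdc,
      lexMaxGain_singleton, ← sg_symm hφ hconn hdc]

lemma eq_one_of_re_abs {z : ℂ} (h1 : ‖z‖ = 1) (h2 : z.re = 1) : z = 1 := by
  have h3 : z.re * z.re + z.im * z.im = 1 := by
    have : Complex.normSq z = 1 := by
      rw [← Complex.sq_norm] at *
      rw [h1]; norm_num
    simpa [Complex.normSq_apply] using this
  have him : z.im = 0 := by nlinarith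
  apply Complex.ext <;> simp [h2, him]

lemma charpoly_conj_aux [Fintype V] [DecidableEq V] (P Q N : Matrix V V ℂ)
    (h : P * Q = 1) : (P * N * Q).charpoly = N.charpoly := by
  classical
  have hmap : (P.map Polynomial.C) * (Q.map Polynomial.C) = 1 := by
    rw [← Matrix.map_mul, h]
    simp
  have hcm : Matrix.charmatrix (P * N * Q)
      = (P.map Polynomial.C) * Matrix.charmatrix N * (Q.map Polynomial.C) := by
    unfold Matrix.charmatrix
    rw [Matrix.mul_sub, Matrix.sub_mul]
    congr 1
    · have hcomm := (Matrix.scalar_commute (Polynomial.X : Polynomial ℂ)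
        (fun r' => Commute.all _ _) (P.map Polynomial.C)).eq
      rw [← hcomm, Matrix.mul_assoc, hmap, Matrix.mul_one]
    · rw [RingHom.mapMatrix_apply, RingHom.mapMatrix_apply, Matrix.map_mul, Matrix.map_mul]
  rw [Matrix.charpoly, Matrix.charpoly, hcm, Matrix.det_mul, Matrix.det_mul]
  have hdet : (P.map Polynomial.C).det * (Q.map Polynomial.C).det = 1 := by
    rw [← Matrix.det_mul, hmap, Matrix.det_one]
  calc (P.map Polynomial.C).det * (Matrix.charmatrix N).det * (Q.map Polynomial.C).det
      = (Matrix.charmatrix N).det * ((P.map Polynomial.C).det * (Q.map Polynomial.C).det) := by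
        ring
    _ = (Matrix.charmatrix N).det := by rw [hdet, mul_one]

lemma charpoly_diagonal [Fintype V] [DecidableEq V] (c : V → ℂ) :
    (Matrix.diagonal c).charpoly = ∏ i, (Polynomial.X - Polynomial.C (c i)) := by
  have hcm : Matrix.charmatrix (Matrix.diagonal c)
      = Matrix.diagonal (fun i => Polynomial.X - Polynomial.C (c i)) := by
    unfold Matrix.charmatrix
    rw [RingHom.mapMatrix_apply, Matrix.diagonal_map (map_zero _)]
    rw [show (Matrix.scalar V (Polynomial.X : Polynomial ℂ))
      = Matrix.diagonal (fun _ : V => (Polynomial.X : Polynomial ℂ)) from rfl]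
    rw [Matrix.diagonal_sub]
  rw [Matrix.charpoly, hcm, Matrix.det_diagonal]


lemma trace_triple [Fintype V] [DecidableEq V] (A : Matrix V V ℂ) :
    (A * A * A).trace = ∑ i, ∑ j, ∑ k, A i j * A j k * A k i := by
  unfold Matrix.trace
  simp only [Matrix.diag_apply, Matrix.mul_apply, Finset.sum_mul]
  apply Finset.sum_congr rfl
  intro i _
  rw [Finset.sum_comm]

lemma herm_trace_cube [Fintype V] [DecidableEq V] {A B : Matrix V V ℂ}
    (hA : A.IsHermitian) (hB : B.IsHermitian) (h : A.charpoly = B.charpoly) :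
    (A * A * A).trace = (B * B * B).trace := by
  have key : ∀ (M : Matrix V V ℂ) (hM : M.IsHermitian),
      M.charpoly = ∏ i, (Polynomial.X - Polynomial.C ((hM.eigenvalues i : ℝ) : ℂ)) ∧
      (M * M * M).trace = ∑ i, (((hM.eigenvalues i : ℝ) : ℂ)) ^ 3 := by
    intro M hM
    set U : Matrix V V ℂ := (hM.eigenvectorUnitary : Matrix V V ℂ) with hUdef
    set D : Matrix V V ℂ := Matrix.diagonal (RCLike.ofReal ∘ hM.eigenvalues) with hDdef
    have hU1 : U * star U = 1 := Matrix.mem_unitaryGroup_iff.mp hM.eigenvectorUnitary.2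
    have hU2 : star U * U = 1 := Matrix.mem_unitaryGroup_iff'.mp hM.eigenvectorUnitary.2
    have hsp : M = U * D * star U := hM.spectral_theorem
    have hDdiag : D = Matrix.diagonal (fun i => ((hM.eigenvalues i : ℝ) : ℂ)) := rfl
    have h2 : ∀ X Y : Matrix V V ℂ, (U * X * star U) * (U * Y * star U)
        = U * (X * Y) * star U := by
      intro X Y
      calc (U * X * star U) * (U * Y * star U)
          = U * X * ((star U * U) * (Y * star U)) := by simp only [Matrix.mul_assoc]
        _ = U * (X * Y) * star U := by
            rw [hU2, Matrix.one_mul]; simp only [Matrix.mul_assoc]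
    constructor
    · conv_lhs => rw [hsp]
      rw [charpoly_conj_aux _ _ _ hU1, hDdiag, charpoly_diagonal]
    · have hobs : M * M * M = U * (D * D * D) * star U := by
        rw [hsp, h2, h2]
      rw [hobs, Matrix.trace_mul_cycle, ← Matrix.mul_assoc, hU2, Matrix.one_mul,
        hDdiag, Matrix.diagonal_mul_diagonal, Matrix.diagonal_mul_diagonal,
        Matrix.trace_diagonal]
      apply Finset.sum_congr rfl
      intro i _
      ring
  obtain ⟨hA1, hA2⟩ := key A hA
  obtain ⟨hB1, hB2⟩ := key B hB
  rw [hA2, hB2]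
  have hchar : ∏ i, (Polynomial.X - Polynomial.C ((hA.eigenvalues i : ℝ) : ℂ))
      = ∏ i, (Polynomial.X - Polynomial.C ((hB.eigenvalues i : ℝ) : ℂ)) := by
    rw [← hA1, ← hB1, h]
  set ma : Multiset ℂ := Finset.univ.val.map (fun i => ((hA.eigenvalues i : ℝ) : ℂ)) with hma
  set mb : Multiset ℂ := Finset.univ.val.map (fun i => ((hB.eigenvalues i : ℝ) : ℂ)) with hmb
  have hprodA : ∏ i, (Polynomial.X - Polynomial.C ((hA.eigenvalues i : ℝ) : ℂ))
      = (ma.map (fun z => Polynomial.X - Polynomial.C z)).prod := by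
    rw [Finset.prod_eq_multiset_prod, hma, Multiset.map_map]
    rfl
  have hprodB : ∏ i, (Polynomial.X - Polynomial.C ((hB.eigenvalues i : ℝ) : ℂ))
      = (mb.map (fun z => Polynomial.X - Polynomial.C z)).prod := by
    rw [Finset.prod_eq_multiset_prod, hmb, Multiset.map_map]
    rfl
  have hroots : ma = mb := by
    have := congrArg Polynomial.roots (hprodA ▸ hprodB ▸ hchar)
    rwa [Polynomial.roots_multiset_prod_X_sub_C, Polynomial.roots_multiset_prod_X_sub_C] at this
  calc ∑ i, (((hA.eigenvalues i : ℝ) : ℂ)) ^ 3 = (ma.map (fun z => z ^ 3)).sum := by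
        rw [Finset.sum_eq_multiset_sum, hma, Multiset.map_map]; rfl
    _ = (mb.map (fun z => z ^ 3)).sum := by rw [hroots]
    _ = ∑ i, (((hB.eigenvalues i : ℝ) : ℂ)) ^ 3 := by
        rw [Finset.sum_eq_multiset_sum, hmb, Multiset.map_map]; rfl

lemma sgMat_isHermitian [Fintype V] [DecidableEq V] {G : SimpleGraph V} {φ : V → V → ℂ}
    (hφ : IsGain G φ) (hconn : G.Connected) (hdc : DistCompatible G φ) :
    Matrix.IsHermitian (fun s t => sg hconn φ s t * (G.dist s t : ℂ) : Matrix V V ℂ) := by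
  unfold Matrix.IsHermitian
  ext i j
  show (starRingEnd ℂ) (sg hconn φ j i * (G.dist j i : ℂ)) = _
  rw [_root_.map_mul, map_natCast, sg_symm hφ hconn hdc i j, Complex.conj_conj,
    SimpleGraph.dist_comm]

lemma distMatrix_isHermitian [Fintype V] [DecidableEq V] (G : SimpleGraph V) :
    (distMatrix G).IsHermitian := by
  unfold Matrix.IsHermitian distMatrix
  ext i j
  show (starRingEnd ℂ) ((G.dist j i : ℂ)) = _
  rw [map_natCast, SimpleGraph.dist_comm]

lemma walkGain_telescope {G : SimpleGraph V} {φ : V → V → ℂ} {θ : V → ℂ}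
    (hθ : ∀ v, θ v * (starRingEnd ℂ) (θ v) = 1)
    (hedge : ∀ a b, G.Adj a b → φ a b = (starRingEnd ℂ) (θ a) * θ b) {a b : V}
    (p : G.Walk a b) : walkGain φ p = (starRingEnd ℂ) (θ a) * θ b := by
  induction p with
  | nil => rw [walkGain_nil, mul_comm]; exact (hθ _).symm
  | @cons x y z h p ih =>
    rw [walkGain_cons, ih, hedge _ _ h]
    have h2 := hθ y
    linear_combination ((starRingEnd ℂ) (θ x) * θ z) * h2

/-- `Φ` is balanced iff it is distance compatible (so `D(Φ)` is well defined)
and `D(Φ)` is cospectral with `D(G)`. -/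
theorem balanced_iff_distCompatible_cospectral {V : Type*} [Fintype V] [DecidableEq V]
    [LinearOrder V] (G : SimpleGraph V) (hconn : G.Connected) (φ : V → V → ℂ)
    (hφ : IsGain G φ) :
    GBalanced G φ ↔
      (DistCompatible G φ ∧ (Dmax G φ (· < ·)).charpoly = (distMatrix G).charpoly) := by
  constructor
  · intro hb
    have hdc : DistCompatible G φ := fun s t p q hp hq => walkGain_endpoint hφ hb p q
    refine ⟨hdc, ?_⟩
    obtain ⟨r⟩ := hconn.nonempty
    set θ : V → ℂ := fun v => sg hconn φ r v with hθdef
    have habs : ∀ v, ‖θ v‖ = 1 := fun v => abs_sg hφ hconn r v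
    have hsg : ∀ s t, sg hconn φ s t = (starRingEnd ℂ) (θ s) * θ t := by
      intro s t
      have h1 : walkGain φ ((hconn.exists_walk_length_eq_dist r s).choose.reverse.append
          (hconn.exists_walk_length_eq_dist r t).choose) = (starRingEnd ℂ) (θ s) * θ t := by
        rw [walkGain_append, walkGain_reverse hφ]
        rfl
      rw [← h1]
      exact walkGain_endpoint hφ hb _ _
    have hAeq : Dmax G φ (· < ·)
        = Matrix.diagonal (fun v => (starRingEnd ℂ) (θ v)) * distMatrix G
          * Matrix.diagonal θ := by
      rw [Dmax_eq hφ hconn hdc]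
      funext s t
      show sg hconn φ s t * (G.dist s t : ℂ)
        = (Matrix.diagonal (fun v => (starRingEnd ℂ) (θ v)) * distMatrix G
          * Matrix.diagonal θ) s t
      rw [Matrix.mul_diagonal, Matrix.diagonal_mul, hsg s t]
      show _ = (starRingEnd ℂ) (θ s) * (G.dist s t : ℂ) * θ t
      ring
    rw [hAeq]
    apply charpoly_conj_aux
    rw [Matrix.diagonal_mul_diagonal]
    have : (fun v => (starRingEnd ℂ) (θ v) * θ v) = fun _ => (1 : ℂ) := by
      funext v
      rw [mul_comm, Complex.mul_conj, Complex.normSq_eq_norm_sq, habs v]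
      norm_num
    rw [this, Matrix.diagonal_one]
  · rintro ⟨hdc, hcp⟩
    intro w c _
    -- abbreviations
    have habs : ∀ s t, ‖sg hconn φ s t‖ = 1 := fun s t => abs_sg hφ hconn s t
    have hne : ∀ s t, sg hconn φ s t ≠ 0 := by
      intro s t h0
      have := habs s t
      rw [h0] at this; simp at this
    have hAeq : Dmax G φ (· < ·) = (fun s t => sg hconn φ s t * (G.dist s t : ℂ)) :=
      Dmax_eq hφ hconn hdc
    have hA : (Dmax G φ (· < ·)).IsHermitian := by
      rw [hAeq]; exact sgMat_isHermitian hφ hconn hdc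
    have hB : (distMatrix G).IsHermitian := distMatrix_isHermitian G
    have htr := herm_trace_cube hA hB hcp
    rw [trace_triple, trace_triple, hAeq] at htr
    -- pass to a single sum over triples
    have htr' : ∑ z : V × V × V,
        (sg hconn φ z.1 z.2.1 * sg hconn φ z.2.1 z.2.2 * sg hconn φ z.2.2 z.1)
          * ((G.dist z.1 z.2.1 * G.dist z.2.1 z.2.2 * G.dist z.2.2 z.1 : ℕ) : ℂ)
        = ∑ z : V × V × V,
          ((G.dist z.1 z.2.1 * G.dist z.2.1 z.2.2 * G.dist z.2.2 z.1 : ℕ) : ℂ) := by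
      simp only [distMatrix] at htr
      simp only [Fintype.sum_prod_type]
      convert htr using 1 <;>
      · apply Finset.sum_congr rfl; intro i _
        apply Finset.sum_congr rfl; intro j _
        apply Finset.sum_congr rfl; intro k _
        push_cast
        ring
    have hre : ∑ z : V × V × V,
        (sg hconn φ z.1 z.2.1 * sg hconn φ z.2.1 z.2.2 * sg hconn φ z.2.2 z.1).re
          * ((G.dist z.1 z.2.1 * G.dist z.2.1 z.2.2 * G.dist z.2.2 z.1 : ℕ) : ℝ)
        = ∑ z : V × V × V,
          ((G.dist z.1 z.2.1 * G.dist z.2.1 z.2.2 * G.dist z.2.2 z.1 : ℕ) : ℝ) := by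
      have := congrArg Complex.re htr'
      rw [Complex.re_sum, Complex.re_sum] at this
      convert this using 2 with z <;> simp [Complex.mul_re]
    have hptwise : ∀ z : V × V × V, z ∈ (Finset.univ : Finset (V × V × V)) →
        (sg hconn φ z.1 z.2.1 * sg hconn φ z.2.1 z.2.2 * sg hconn φ z.2.2 z.1).re
          * ((G.dist z.1 z.2.1 * G.dist z.2.1 z.2.2 * G.dist z.2.2 z.1 : ℕ) : ℝ)
        = ((G.dist z.1 z.2.1 * G.dist z.2.1 z.2.2 * G.dist z.2.2 z.1 : ℕ) : ℝ) := by
      rw [← Finset.sum_eq_sum_iff_of_le]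
      · exact hre
      · intro z _
        have h1 : (sg hconn φ z.1 z.2.1 * sg hconn φ z.2.1 z.2.2 * sg hconn φ z.2.2 z.1).re
            ≤ 1 := by
          have := Complex.re_le_norm
            (sg hconn φ z.1 z.2.1 * sg hconn φ z.2.1 z.2.2 * sg hconn φ z.2.2 z.1)
          rw [norm_mul, norm_mul, habs, habs, habs] at this
          linarith
        have h2 : (0 : ℝ) ≤ ((G.dist z.1 z.2.1 * G.dist z.2.1 z.2.2 * G.dist z.2.2 z.1 : ℕ) : ℝ) := by
          positivity
        nlinarith
    have htri : ∀ i j k : V, i ≠ j → j ≠ k → k ≠ i →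
        sg hconn φ i j * sg hconn φ j k * sg hconn φ k i = 1 := by
      intro i j k hij hjk hki
      have hz := hptwise (i, j, k) (Finset.mem_univ _)
      simp only at hz
      have hd : 0 < (G.dist i j * G.dist j k * G.dist k i : ℕ) := by
        have h1 := hconn.pos_dist_of_ne hij
        have h2 := hconn.pos_dist_of_ne hjk
        have h3 := hconn.pos_dist_of_ne hki
        positivity
      have hdr : (0 : ℝ) < ((G.dist i j * G.dist j k * G.dist k i : ℕ) : ℝ) := by
        exact_mod_cast hd
      have hre1 : (sg hconn φ i j * sg hconn φ j k * sg hconn φ k i).re = 1 := by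
        have := mul_right_cancel₀ (ne_of_gt hdr) (hz.trans (one_mul _).symm)
        exact this
      apply eq_one_of_re_abs _ hre1
      rw [norm_mul, norm_mul, habs, habs, habs]
      norm_num
    -- edge identity with base w
    have hedge : ∀ a b, G.Adj a b →
        φ a b = (starRingEnd ℂ) (sg hconn φ w a) * sg hconn φ w b := by
      intro a b hab
      by_cases hwa : w = a
      · subst hwa
        rw [sg_self, _root_.map_one, one_mul]
        exact (sg_adj hconn hdc hab).symm
      · by_cases hwb : w = b
        · subst hwb
          rw [sg_self, mul_one, ← sg_symm hφ hconn hdc]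
          exact (sg_adj hconn hdc hab).symm
        · have h1 := htri w a b hwa hab.ne (Ne.symm hwb)
          rw [← sg_adj hconn hdc hab]
          have hza := hne w a
          have hzb := hne b w
          have hinva : (sg hconn φ w a)⁻¹ = (starRingEnd ℂ) (sg hconn φ w a) :=
            Complex.inv_eq_conj (habs w a)
          have hinvb : (sg hconn φ b w)⁻¹ = sg hconn φ w b := by
            rw [Complex.inv_eq_conj (habs b w), sg_symm hφ hconn hdc w b, Complex.conj_conj]
          have h2 : sg hconn φ a b = (sg hconn φ w a)⁻¹ * (sg hconn φ b w)⁻¹ := by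
            field_simp
            linear_combination h1
          rw [h2, hinva, hinvb]
    have hθ1 : ∀ v, sg hconn φ w v * (starRingEnd ℂ) (sg hconn φ w v) = 1 := by
      intro v
      rw [Complex.mul_conj, Complex.normSq_eq_norm_sq, habs w v]
      norm_num
    have := walkGain_telescope hθ1 hedge c
    rw [this, sg_self, _root_.map_one, one_mul]

end GG
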